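/- Let u, v ∈ ℂ with u ≠ v, and let α, β, A ∈ ℂ all nonzero. On ℂ² with coordinates (x,y), the functions t_m(x,y) = exp(α·β·x·y/(u−v)²)·(u−v)^{−m(m−1)}·A^m·(α·β)^{m(m−1)/2} satisfy the bilinear 2dTHE: t_m·∂x∂y t_m − (∂x t_m)·(∂y t_m) = t_{m+1}·t_{m−1} on ℂ² for every m ∈ ℤ. -/

import Mathlib

/-- Partial derivative in the first (x) variable of a function on ℂ². -/
noncomputable def pdx (u : ℂ × ℂ → ℂ) : ℂ × ℂ → ℂ :=
  fun p => deriv (fun t => u (t, p.2)) p.1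

/-- Partial derivative in the second (y) variable of a function on ℂ². -/
noncomputable def pdy (u : ℂ × ℂ → ℂ) : ℂ × ℂ → ℂ :=
  fun p => deriv (fun t => u (p.1, t)) p.2

private lemma two_dvd_mul_pred (n : ℤ) : 2 ∣ n * (n - 1) := by
  rcases Int.even_or_odd n with ⟨c, hc⟩ | ⟨c, hc⟩
  · exact ⟨c * (n - 1), by rw [hc]; ring⟩
  · exact ⟨n * c, by rw [hc]; ring⟩

theorem seed_solution_doubly_confluent_case
    (u₀ v₀ : ℂ) (huv : u₀ ≠ v₀)
    (α β A : ℂ) (hα : α ≠ 0) (hβ : β ≠ 0) (hA : A ≠ 0)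
    (t : ℤ → ℂ × ℂ → ℂ)
    (ht : ∀ (m : ℤ) (P : ℂ × ℂ),
      t m P = Complex.exp (α * β * P.1 * P.2 / (u₀ - v₀) ^ 2)
        * (u₀ - v₀) ^ (-(m * (m - 1))) * A ^ m * (α * β) ^ (m * (m - 1) / 2)) :
    ∀ m : ℤ, ∀ P : ℂ × ℂ,
      t m P * pdx (pdy (t m)) P - pdx (t m) P * pdy (t m) P = t (m + 1) P * t (m - 1) P := by
  intro m P
  obtain ⟨x, y⟩ := P
  have hd : u₀ - v₀ ≠ 0 := sub_ne_zero.mpr huv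
  have hab : α * β ≠ 0 := mul_ne_zero hα hβ
  set d : ℂ := u₀ - v₀ with hdd
  set k : ℂ := α * β / d ^ 2 with hk
  set C : ℤ → ℂ := fun m => d ^ (-(m * (m - 1))) * A ^ m * (α * β) ^ (m * (m - 1) / 2)
    with hCdef
  have htC : ∀ n : ℤ, t n = fun P : ℂ × ℂ => Complex.exp (k * P.1 * P.2) * C n := by
    intro n
    funext Q
    rw [ht n Q]
    simp only [hCdef, hk]
    ring_nf
  -- formula for pdy
  have hpdy : ∀ n : ℤ, pdy (t n) = fun P : ℂ × ℂ =>
      Complex.exp (k * P.1 * P.2) * C n * (k * P.1) := by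
    intro n
    funext Q
    simp only [pdy, htC n]
    have h1 : HasDerivAt (fun s : ℂ => Complex.exp (k * Q.1 * s) * C n)
        (Complex.exp (k * Q.1 * Q.2) * (k * Q.1) * C n) Q.2 := by
      have h0 : HasDerivAt (fun s : ℂ => k * Q.1 * s) (k * Q.1) Q.2 := by
        simpa using (hasDerivAt_id Q.2).const_mul (k * Q.1)
      simpa using h0.cexp.mul_const (C n)
    rw [h1.deriv]; ring
  have hpdx : ∀ n : ℤ, pdx (t n) = fun P : ℂ × ℂ =>
      Complex.exp (k * P.1 * P.2) * C n * (k * P.2) := by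
    intro n
    funext Q
    simp only [pdx, htC n]
    have h1 : HasDerivAt (fun s : ℂ => Complex.exp (k * s * Q.2) * C n)
        (Complex.exp (k * Q.1 * Q.2) * (k * Q.2) * C n) Q.1 := by
      have h0 : HasDerivAt (fun s : ℂ => k * s * Q.2) (k * Q.2) Q.1 := by
        simpa [mul_comm, mul_assoc, mul_left_comm] using
          (hasDerivAt_id Q.1).const_mul (k * Q.2)
      simpa using h0.cexp.mul_const (C n)
    rw [h1.deriv]; ring
  have hpdxy : pdx (pdy (t m)) (x, y) =
      Complex.exp (k * x * y) * C m * (k + k * y * (k * x)) := by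
    simp only [pdx, hpdy m]
    have h0 : HasDerivAt (fun s : ℂ => k * s * y) (k * y) x := by
      simpa [mul_comm, mul_assoc, mul_left_comm] using
        (hasDerivAt_id x).const_mul (k * y)
    have h2 : HasDerivAt (fun s : ℂ => C m * (k * s)) (C m * k) x := by
      simpa [mul_assoc] using (hasDerivAt_id x).const_mul (C m * k)
    have h3 := (h0.cexp).mul h2
    have heq : (fun s : ℂ => Complex.exp (k * s * y) * C m * (k * s)) =
        fun s : ℂ => Complex.exp (k * s * y) * (C m * (k * s)) := by
      funext s; ring
    rw [heq, (show HasDerivAt (fun s : ℂ => Complex.exp (k * s * y) * (C m * (k * s))) _ x from h3).deriv]; ring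
  -- exponent arithmetic
  obtain ⟨q0, hq0⟩ := two_dvd_mul_pred m
  obtain ⟨q1, hq1⟩ := two_dvd_mul_pred (m + 1)
  obtain ⟨q2, hq2⟩ := two_dvd_mul_pred (m - 1)
  have hdiv0 : m * (m - 1) / 2 = q0 := by
    rw [hq0]; exact Int.mul_ediv_cancel_left q0 (by norm_num)
  have hdiv1 : (m + 1) * (m + 1 - 1) / 2 = q1 := by
    rw [hq1]; exact Int.mul_ediv_cancel_left q1 (by norm_num)
  have hdiv2 : (m - 1) * (m - 1 - 1) / 2 = q2 := by
    rw [hq2]; exact Int.mul_ediv_cancel_left q2 (by norm_num)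
  have hident : (m + 1) * (m + 1 - 1) + (m - 1) * (m - 1 - 1) = 2 * (m * (m - 1)) + 2 := by
    ring
  have hg : (m + 1) * (m + 1 - 1) / 2 + (m - 1) * (m - 1 - 1) / 2
      = m * (m - 1) / 2 + m * (m - 1) / 2 + 1 := by
    rw [hdiv0, hdiv1, hdiv2]; linarith [hq0, hq1, hq2, hident]
  have he : -((m + 1) * (m + 1 - 1)) + -((m - 1) * (m - 1 - 1))
      = -2 + (-(m * (m - 1)) + -(m * (m - 1))) := by ring
  have hk2 : k = α * β * d ^ (-2 : ℤ) := by
    rw [hk, zpow_neg, zpow_two]; field_simp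
  have key : ∀ a b c a' b' c' : ℤ,
      (d ^ a * A ^ b * (α * β) ^ c) * (d ^ a' * A ^ b' * (α * β) ^ c')
        = d ^ (a + a') * A ^ (b + b') * (α * β) ^ (c + c') := by
    intro a b c a' b' c'
    rw [zpow_add₀ hd, zpow_add₀ hA, zpow_add₀ hab]; ring
  have h1 : k = d ^ (-2 : ℤ) * A ^ (0 : ℤ) * (α * β) ^ (1 : ℤ) := by
    rw [hk2, zpow_zero, zpow_one]; ring
  have hmm : C m * C m = d ^ (-(m * (m - 1)) + -(m * (m - 1))) * A ^ (m + m)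
      * (α * β) ^ (m * (m - 1) / 2 + m * (m - 1) / 2) := by
    simp only [hCdef]; exact key _ _ _ _ _ _
  have hCkey : C (m + 1) * C (m - 1) = k * (C m * C m) := by
    have hL : C (m + 1) * C (m - 1)
        = d ^ (-((m + 1) * (m + 1 - 1)) + -((m - 1) * (m - 1 - 1)))
          * A ^ ((m + 1) + (m - 1))
          * (α * β) ^ ((m + 1) * (m + 1 - 1) / 2 + (m - 1) * (m - 1 - 1) / 2) := by
      simp only [hCdef]; exact key _ _ _ _ _ _
    rw [hL, hmm, h1, key, he, hg, show (m + 1) + (m - 1) = 0 + (m + m) by ring,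
      show m * (m - 1) / 2 + m * (m - 1) / 2 + 1
        = 1 + (m * (m - 1) / 2 + m * (m - 1) / 2) by ring]
  -- put it together
  rw [hpdxy, hpdx m, hpdy m]
  simp only [htC]
  linear_combination -(Complex.exp (k * x * y)) ^ 2 * hCkey
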